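/- Let y = (y_1, ..., y_n) be a vector of n positive integer car lengths. Then every x ∈ PAinv↑_n(y) lies in {1}^{n−χ(y)} × W(y)^{χ(y)}, i.e., its first n−χ(y) entries equal 1 and its remaining χ(y) entries belong to W(y). In particular, |PAinv↑_n(y)| ≤ binom(2^{n−1} + n − 2, n − 1). -/

import Mathlib

/-- Car with preference `pref` and length `len` fits at spot `s`:
`pref ≤ s`, the spots `s, s+1, ..., s+len-1` all lie in the lot `[1, m]`,
and none of them is occupied. -/
def FitsAt (occ : Finset ℕ) (m pref len s : ℕ) : Prop :=
  pref ≤ s ∧ s + len ≤ m + 1 ∧ ∀ t ∈ Finset.Ico s (s + len), t ∉ occ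

/-- The car parks at `s`: `s` is the least spot (≥ its preference) where it fits. -/
def ParksAt (occ : Finset ℕ) (m pref len s : ℕ) : Prop :=
  FitsAt occ m pref len s ∧ ∀ s' < s, ¬ FitsAt occ m pref len s'

/-- Every car in the list of (preference, length) pairs can park, with
cars entering in order, starting from the set `occ` of occupied spots. -/
inductive Park (m : ℕ) : Finset ℕ → List (ℕ × ℕ) → Prop
  | nil (occ : Finset ℕ) : Park m occ []
  | cons (occ : Finset ℕ) (pref len : ℕ) (rest : List (ℕ × ℕ)) (s : ℕ) :
      ParksAt occ m pref len s →
      Park m (occ ∪ Finset.Ico s (s + len)) rest →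
      Park m occ ((pref, len) :: rest)

/-- `x` is a parking assortment for the length vector `y`. -/
def PA (y x : List ℕ) : Prop :=
  x.length = y.length ∧ (∀ v ∈ x, 1 ≤ v ∧ v ≤ y.sum) ∧ Park y.sum ∅ (x.zip y)

/-- `x` is a (permutation) invariant parking assortment for `y`. -/
def PAinv (y x : List ℕ) : Prop :=
  ∀ x' : List ℕ, x.Perm x' → PA y x'

/-- The degree of `x`: the number of entries of `x` different from 1. -/
def deg (x : List ℕ) : ℕ := (x.filter (fun v => v ≠ 1)).length

/-- The characteristic of `y`: the greatest degree over all invariant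
parking assortments for `y`. -/
noncomputable def chi (y : List ℕ) : ℕ := sSup {d | ∃ x, PAinv y x ∧ deg x = d}

/-- The invariant solution set of `y`. -/
def Wset (y : List ℕ) : Set ℕ :=
  {w | PAinv y (List.replicate (y.length - 1) 1 ++ [w])}
/-! ### Basic lemmas about the parking process -/

lemma fitsAt_mono {occ : Finset ℕ} {m u v ℓ s : ℕ} (h : FitsAt occ m v ℓ s) (huv : u ≤ v) :
    FitsAt occ m u ℓ s :=
  ⟨le_trans huv h.1, h.2.1, h.2.2⟩

lemma parksAt_unique {occ : Finset ℕ} {m p ℓ s s' : ℕ}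
    (h : ParksAt occ m p ℓ s) (h' : ParksAt occ m p ℓ s') : s = s' := by
  rcases lt_trichotomy s s' with hlt | heq | hgt
  · exact absurd h.1 (h'.2 s hlt)
  · exact heq
  · exact absurd h'.1 (h.2 s' hgt)

lemma parksAt_raise {occ : Finset ℕ} {m u v ℓ s : ℕ}
    (h : ParksAt occ m u ℓ s) (huv : u ≤ v) (hvs : v ≤ s) : ParksAt occ m v ℓ s := by
  refine ⟨⟨hvs, h.1.2.1, h.1.2.2⟩, fun s' hs' hfit => h.2 s' hs' (fitsAt_mono hfit huv)⟩

lemma card_step {occ : Finset ℕ} {m p ℓ s : ℕ} (h : FitsAt occ m p ℓ s) :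
    (occ ∪ Finset.Ico s (s + ℓ)).card = occ.card + ℓ := by
  rw [Finset.card_union_of_disjoint, Nat.card_Ico]
  · omega
  · rw [Finset.disjoint_right]
    intro a ha
    exact h.2.2 a ha

lemma subset_step {occ : Finset ℕ} {m p ℓ s : ℕ} (h : FitsAt occ m p ℓ s) (hp : 1 ≤ p)
    (hsub : occ ⊆ Finset.Icc 1 m) : occ ∪ Finset.Ico s (s + ℓ) ⊆ Finset.Icc 1 m := by
  intro a ha
  rcases Finset.mem_union.mp ha with ha | ha
  · exact hsub ha
  · rw [Finset.mem_Ico] at ha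
    rw [Finset.mem_Icc]
    have h1 := h.1
    have h2 := h.2.1
    omega

/-- If the remaining lengths together with the current occupancy exactly fill the lot,
then a free spot dominated by all preferences leads to a contradiction. -/
lemma uncov (m : ℕ) : ∀ (l : List (ℕ × ℕ)) (occ : Finset ℕ) (t : ℕ),
    Park m occ l → (∀ c ∈ l, 1 ≤ c.1) → occ ⊆ Finset.Icc 1 m →
    (l.map Prod.snd).sum + occ.card = m →
    1 ≤ t → t ≤ m → t ∉ occ → (∀ c ∈ l, t < c.1) → False := by
  intro l
  induction l with
  | nil =>
    intro occ t hpark h1 hsub hsum ht1 htm htocc hgt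
    have hocc : occ = Finset.Icc 1 m := by
      apply Finset.eq_of_subset_of_card_le hsub
      rw [Nat.card_Icc]
      simp at hsum
      omega
    exact htocc (hocc ▸ Finset.mem_Icc.mpr ⟨ht1, htm⟩)
  | cons c l ih =>
    intro occ t hpark h1 hsub hsum ht1 htm htocc hgt
    obtain ⟨p, ℓ⟩ := c
    cases hpark with
    | cons _ _ _ _ s hps hrest =>
      have hp1 : 1 ≤ p := h1 (p, ℓ) (List.mem_cons_self)
      have htp : t < p := hgt (p, ℓ) (List.mem_cons_self)
      have hfit := hps.1
      refine ih (occ ∪ Finset.Ico s (s + ℓ)) t hrest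
        (fun c hc => h1 c (List.mem_cons_of_mem _ hc))
        (subset_step hfit hp1 hsub) ?_ ht1 htm ?_
        (fun c hc => hgt c (List.mem_cons_of_mem _ hc))
      · rw [card_step hfit]
        simp at hsum ⊢
        omega
      · intro ha
        rcases Finset.mem_union.mp ha with ha | ha
        · exact htocc ha
        · rw [Finset.mem_Ico] at ha
          have := hfit.1
          omega

/-- Cars with preference 1 fill a left-aligned occupied region contiguously. -/
lemma contig (m : ℕ) : ∀ (lens : List ℕ) (c : ℕ),
    (∀ v ∈ lens, 1 ≤ v) → c + lens.sum ≤ m →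
    Park m (Finset.Ico 1 (c + 1)) ((List.replicate lens.length 1).zip lens) := by
  intro lens
  induction lens with
  | nil => intro c _ _; exact Park.nil _
  | cons ℓ lens ih =>
    intro c hpos hsum
    have hl1 : 1 ≤ ℓ := hpos ℓ (List.mem_cons_self)
    have hsum' : ℓ + lens.sum = (ℓ :: lens).sum := by simp
    have hparks : ParksAt (Finset.Ico 1 (c + 1)) m 1 ℓ (c + 1) := by
      constructor
      · refine ⟨by omega, by simp at hsum; omega, ?_⟩
        intro t ht
        rw [Finset.mem_Ico] at ht ⊢
        push_neg
        intro h; omega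
      · intro s' hs' hfit
        have h1 : 1 ≤ s' := hfit.1
        have := hfit.2.2 s' (Finset.mem_Ico.mpr ⟨le_refl _, by omega⟩)
        rw [Finset.mem_Ico] at this
        exact this ⟨h1, hs'⟩
    have hunion : Finset.Ico 1 (c + 1) ∪ Finset.Ico (c + 1) (c + 1 + ℓ) =
        Finset.Ico 1 (c + 1 + ℓ) := Finset.Ico_union_Ico_eq_Ico (by omega) (by omega)
    have hih := ih (c + ℓ) (fun v hv => hpos v (List.mem_cons_of_mem _ hv)) (by simp at hsum; omega)
    show Park m (Finset.Ico 1 (c + 1)) ((1 :: List.replicate lens.length 1).zip (ℓ :: lens))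
    rw [List.zip_cons_cons]
    refine Park.cons _ 1 ℓ _ (c + 1) hparks ?_
    rw [hunion]
    have : c + 1 + ℓ = c + ℓ + 1 := by omega
    rw [this]
    exact hih

/-! ### Invariance machinery -/

def AllPerm (m : ℕ) (occ : Finset ℕ) (lens M : List ℕ) : Prop :=
  ∀ pr : List ℕ, pr.Perm M → Park m occ (pr.zip lens)

lemma exists_park {m : ℕ} {occ : Finset ℕ} {ℓ : ℕ} {lens' M : List ℕ} {v : ℕ}
    (hall : AllPerm m occ (ℓ :: lens') M) (hv : v ∈ M) :
    ∃ s, ParksAt occ m v ℓ s := by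
  have hperm : (v :: M.erase v).Perm M := (List.perm_cons_erase hv).symm
  have := hall _ hperm
  rw [List.zip_cons_cons] at this
  cases this with
  | cons _ _ _ _ s hps _ => exact ⟨s, hps⟩

lemma peel {m : ℕ} {occ : Finset ℕ} {ℓ : ℕ} {lens' M : List ℕ} {v s : ℕ}
    (hv : v ∈ M) (hall : AllPerm m occ (ℓ :: lens') M) (hps : ParksAt occ m v ℓ s) :
    AllPerm m (occ ∪ Finset.Ico s (s + ℓ)) lens' (M.erase v) := by
  intro pr hpr
  have hperm : (v :: pr).Perm M := ((hpr.cons v).trans (List.perm_cons_erase hv).symm)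
  have h2 := hall _ hperm
  rw [List.zip_cons_cons] at h2
  cases h2 with
  | cons _ _ _ _ s' hps' hrest =>
    have : s' = s := parksAt_unique hps' hps
    rwa [this] at hrest

lemma exists_small {m : ℕ} {occ : Finset ℕ} {lens M : List ℕ}
    (hall : AllPerm m occ lens M) (hlen : M.length = lens.length)
    (hMpos : ∀ v ∈ M, 1 ≤ v) (hsub : occ ⊆ Finset.Icc 1 m)
    (hsum : lens.sum + occ.card = m) (t : ℕ)
    (h1 : 1 ≤ t) (h2 : t ≤ m) (h3 : t ∉ occ) : ∃ v ∈ M, v ≤ t := by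
  by_contra h
  push_neg at h
  have hmsz : (M.zip lens).map Prod.snd = lens :=
    List.map_snd_zip (le_of_eq hlen.symm)
  refine uncov m (M.zip lens) occ t (hall M (List.Perm.refl M))
    (fun c hc => hMpos c.1 (List.of_mem_zip (by exact hc)).1) hsub
    (by rw [hmsz]; exact hsum) h1 h2 h3
    (fun c hc => h c.1 (List.of_mem_zip (by exact hc)).1)

/-- Key lemma: if every arrangement of the preference multiset `M` parks, then
the all-ones preference list parks. -/
lemma allOnes (m : ℕ) : ∀ (lens M : List ℕ) (occ : Finset ℕ),
    M.length = lens.length → (∀ c ∈ lens, 1 ≤ c) → (∀ v ∈ M, 1 ≤ v) →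
    occ ⊆ Finset.Icc 1 m → lens.sum + occ.card = m →
    AllPerm m occ lens M →
    Park m occ ((List.replicate M.length 1).zip lens) := by
  intro lens
  induction lens with
  | nil =>
    intro M occ hlen _ _ _ _ _
    have : M = [] := List.length_eq_zero_iff.mp hlen
    subst this
    exact Park.nil _
  | cons ℓ lens ih =>
    intro M occ hlen hc hM hsub hsum hall
    classical
    have hl1 : 1 ≤ ℓ := hc ℓ (List.mem_cons_self)
    obtain ⟨v₀, hv₀⟩ : ∃ v, v ∈ M := by
      cases M with
      | nil => simp at hlen
      | cons a _ => exact ⟨a, List.mem_cons_self⟩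
    obtain ⟨s₀, hs₀⟩ := exists_park hall hv₀
    have hfit1 : FitsAt occ m 1 ℓ s₀ := fitsAt_mono hs₀.1 (hM v₀ hv₀)
    have hex : ∃ s, FitsAt occ m 1 ℓ s := ⟨s₀, hfit1⟩
    set p := Nat.find hex with hpdef
    have hp : FitsAt occ m 1 ℓ p := Nat.find_spec hex
    have hpark1 : ParksAt occ m 1 ℓ p := ⟨hp, fun s' h => Nat.find_min hex h⟩
    have hp1 : 1 ≤ p := hp.1
    have hpm : p ≤ m := by have := hp.2.1; omega
    have hpocc : p ∉ occ := hp.2.2 p (Finset.mem_Ico.mpr ⟨le_refl _, by omega⟩)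
    obtain ⟨v', hv'M, hv'le⟩ := exists_small hall hlen hM hsub hsum p hp1 hpm hpocc
    have hparkv' : ParksAt occ m v' ℓ p := parksAt_raise hpark1 (hM v' hv'M) hv'le
    have hall' := peel hv'M hall hparkv'
    have hlenM : M.length = lens.length + 1 := by simpa using hlen
    have hlen' : (M.erase v').length = lens.length := by
      rw [List.length_erase_of_mem hv'M, hlenM]; omega
    have hih := ih (M.erase v') (occ ∪ Finset.Ico p (p + ℓ)) hlen'
      (fun v hv => hc v (List.mem_cons_of_mem _ hv))
      (fun v hv => hM v (List.mem_of_mem_erase hv))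
      (subset_step hp le_rfl hsub)
      (by rw [card_step hp]; simp at hsum; omega)
      hall'
    rw [hlenM, List.replicate_succ, List.zip_cons_cons]
    refine Park.cons _ 1 ℓ _ p hpark1 ?_
    rwa [hlen'] at hih

/-- Key lemma: if every arrangement of `M` parks, and `w` is in `M` (or dominated by
all of `M`), then the list with `w` in one position and 1s elsewhere parks. -/
lemma z3 (m : ℕ) : ∀ (lens : List ℕ) (a : ℕ) (M : List ℕ) (occ : Finset ℕ) (w b : ℕ),
    M.length = lens.length → a + b + 1 = M.length →
    (∀ c ∈ lens, 1 ≤ c) → (∀ v ∈ M, 1 ≤ v) → 1 ≤ w →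
    occ ⊆ Finset.Icc 1 m → lens.sum + occ.card = m →
    AllPerm m occ lens M →
    (w ∈ M ∨ ∀ v ∈ M, w ≤ v) →
    Park m occ ((List.replicate a 1 ++ w :: List.replicate b 1).zip lens) := by
  intro lens
  induction lens with
  | nil =>
    intro a M occ w b hlen hab _ _ _ _ _ _ _
    rw [List.length_eq_zero_iff.mp hlen] at hab
    simp at hab
  | cons ℓ lens ih =>
    intro a M occ w b hlen hab hc hM hw hsub hsum hall hcase
    classical
    have hl1 : 1 ≤ ℓ := hc ℓ (List.mem_cons_self)
    obtain ⟨v₀, hv₀⟩ : ∃ v, v ∈ M := by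
      cases M with
      | nil => simp at hab
      | cons a _ => exact ⟨a, List.mem_cons_self⟩
    obtain ⟨s₀, hs₀⟩ := exists_park hall hv₀
    have hfit1 : FitsAt occ m 1 ℓ s₀ := fitsAt_mono hs₀.1 (hM v₀ hv₀)
    have hex : ∃ s, FitsAt occ m 1 ℓ s := ⟨s₀, hfit1⟩
    set p := Nat.find hex with hpdef
    have hp : FitsAt occ m 1 ℓ p := Nat.find_spec hex
    have hpark1 : ParksAt occ m 1 ℓ p := ⟨hp, fun s' h => Nat.find_min hex h⟩
    have hp1 : 1 ≤ p := hp.1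
    have hpm : p ≤ m := by have := hp.2.1; omega
    have hpocc : p ∉ occ := hp.2.2 p (Finset.mem_Ico.mpr ⟨le_refl _, by omega⟩)
    have hsum' : lens.sum + (occ ∪ Finset.Ico p (p + ℓ)).card = m := by
      rw [card_step hp]; simp at hsum; omega
    have hsub' : occ ∪ Finset.Ico p (p + ℓ) ⊆ Finset.Icc 1 m := subset_step hp le_rfl hsub
    have hcpos' : ∀ v ∈ lens, 1 ≤ v := fun v hv => hc v (List.mem_cons_of_mem _ hv)
    cases a with
    | zero =>
      -- goal: (w :: replicate b 1).zip (ℓ :: lens)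
      rcases hcase with hwM | hdom
      · obtain ⟨s, hs⟩ := exists_park hall hwM
        have hall' := peel hwM hall hs
        have hb : b = (M.erase w).length := by
          rw [List.length_erase_of_mem hwM]; omega
        have hih := allOnes m lens (M.erase w) (occ ∪ Finset.Ico s (s + ℓ))
          (by rw [List.length_erase_of_mem hwM]; simp at hlen ⊢; omega)
          hcpos' (fun v hv => hM v (List.mem_of_mem_erase hv))
          (subset_step hs.1 hw hsub)
          (by rw [card_step hs.1]; simp at hsum; omega)
          hall'
        show Park m occ (((w :: List.replicate b 1)).zip (ℓ :: lens))
        rw [List.zip_cons_cons]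
        refine Park.cons _ w ℓ _ s hs ?_
        rwa [← hb] at hih
      · obtain ⟨v', hv'M, hv'le⟩ := exists_small hall hlen hM hsub hsum p hp1 hpm hpocc
        have hwp : w ≤ p := le_trans (hdom v' hv'M) hv'le
        have hparkw : ParksAt occ m w ℓ p := parksAt_raise hpark1 hw hwp
        have hparkv' : ParksAt occ m v' ℓ p := parksAt_raise hpark1 (hM v' hv'M) hv'le
        have hall' := peel hv'M hall hparkv'
        have hb : b = (M.erase v').length := by
          rw [List.length_erase_of_mem hv'M]; omega
        have hih := allOnes m lens (M.erase v') (occ ∪ Finset.Ico p (p + ℓ))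
          (by rw [List.length_erase_of_mem hv'M]; simp at hlen ⊢; omega)
          hcpos' (fun v hv => hM v (List.mem_of_mem_erase hv))
          hsub' hsum' hall'
        show Park m occ (((w :: List.replicate b 1)).zip (ℓ :: lens))
        rw [List.zip_cons_cons]
        refine Park.cons _ w ℓ _ p hparkw ?_
        rwa [← hb] at hih
    | succ a =>
      -- first car has preference 1, parks at p
      have hgoal : (List.replicate (a+1) 1 ++ w :: List.replicate b 1).zip (ℓ :: lens) =
          (1, ℓ) :: ((List.replicate a 1 ++ w :: List.replicate b 1).zip lens) := by
        rw [List.replicate_succ, List.cons_append, List.zip_cons_cons]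
      rw [hgoal]
      rcases hcase with hwM | hdom
      · by_cases hc1 : ∃ v', (v' ∈ M ∧ v' ≤ p) ∧ w ∈ M.erase v'
        · obtain ⟨v', ⟨hv'M, hv'le⟩, hwrem⟩ := hc1
          have hparkv' : ParksAt occ m v' ℓ p := parksAt_raise hpark1 (hM v' hv'M) hv'le
          have hall' := peel hv'M hall hparkv'
          refine Park.cons _ 1 ℓ _ p hpark1 ?_
          refine ih a (M.erase v') _ w b
            (by rw [List.length_erase_of_mem hv'M]; simp at hlen ⊢; omega)
            (by rw [List.length_erase_of_mem hv'M]; omega)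
            hcpos' (fun v hv => hM v (List.mem_of_mem_erase hv)) hw
            hsub' hsum' hall' (Or.inl hwrem)
        · obtain ⟨v₁, hv₁M, hv₁le⟩ := exists_small hall hlen hM hsub hsum p hp1 hpm hpocc
          have hwnot : w ∉ M.erase v₁ := fun hmem => hc1 ⟨v₁, ⟨hv₁M, hv₁le⟩, hmem⟩
          have hwv₁ : w = v₁ := by
            by_contra hne
            exact hwnot ((List.mem_erase_of_ne hne).mpr hwM)
          have hwp : w ≤ p := hwv₁ ▸ hv₁le
          have hdom' : ∀ u ∈ M.erase v₁, w ≤ u := by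
            intro u hu
            by_contra hltu
            push_neg at hltu
            have huM : u ∈ M := List.mem_of_mem_erase hu
            have hune : w ≠ u := by omega
            have hup : u ≤ p := by omega
            exact hc1 ⟨u, ⟨huM, hup⟩, (List.mem_erase_of_ne hune).mpr hwM⟩
          have hparkv₁ : ParksAt occ m v₁ ℓ p := parksAt_raise hpark1 (hM v₁ hv₁M) hv₁le
          have hall' := peel hv₁M hall hparkv₁
          refine Park.cons _ 1 ℓ _ p hpark1 ?_
          refine ih a (M.erase v₁) _ w b
            (by rw [List.length_erase_of_mem hv₁M]; simp at hlen ⊢; omega)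
            (by rw [List.length_erase_of_mem hv₁M]; omega)
            hcpos' (fun v hv => hM v (List.mem_of_mem_erase hv)) hw
            hsub' hsum' hall' (Or.inr hdom')
      · obtain ⟨v₁, hv₁M, hv₁le⟩ := exists_small hall hlen hM hsub hsum p hp1 hpm hpocc
        have hparkv₁ : ParksAt occ m v₁ ℓ p := parksAt_raise hpark1 (hM v₁ hv₁M) hv₁le
        have hall' := peel hv₁M hall hparkv₁
        refine Park.cons _ 1 ℓ _ p hpark1 ?_
        refine ih a (M.erase v₁) _ w b
          (by rw [List.length_erase_of_mem hv₁M]; simp at hlen ⊢; omega)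
          (by rw [List.length_erase_of_mem hv₁M]; omega)
          hcpos' (fun v hv => hM v (List.mem_of_mem_erase hv)) hw
          hsub' hsum' hall'
          (Or.inr (fun v hv => hdom v (List.mem_of_mem_erase hv)))

/-! ### Structural lemmas -/

lemma sum_pos_of_ne_nil {y : List ℕ} (hy : y ≠ []) (hpos : ∀ v ∈ y, 0 < v) : 1 ≤ y.sum := by
  cases y with
  | nil => exact absurd rfl hy
  | cons a l =>
    have := hpos a (List.mem_cons_self)
    simp [List.sum_cons]
    omega

lemma decomp : ∀ (l : List ℕ) (k : ℕ) (w : ℕ), w ≠ 1 →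
    l.Perm (List.replicate k 1 ++ [w]) →
    ∃ a b, a + b = k ∧ l = List.replicate a 1 ++ w :: List.replicate b 1 := by
  intro l
  induction l with
  | nil =>
    intro k w _ hperm
    have := hperm.length_eq
    simp at this
  | cons c l ih =>
    intro k w hw hperm
    have hc : c ∈ List.replicate k 1 ++ [w] := hperm.subset (List.mem_cons_self)
    rw [List.mem_append, List.mem_replicate] at hc
    by_cases hcw : c = w
    · subst hcw
      have hperm' : l.Perm (List.replicate k 1) := by
        have h1 := hperm.erase c
        rw [List.erase_cons_head] at h1
        rwa [List.erase_append_right _ (by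
          rw [List.mem_replicate]; exact fun h => hw h.2), List.erase_cons_head,
          List.append_nil] at h1
      have hl : l = List.replicate k 1 := by
        rw [List.eq_replicate_iff]
        exact ⟨by simpa using hperm'.length_eq,
          fun b hb => (List.mem_replicate.mp (hperm'.subset hb)).2⟩
      exact ⟨0, k, by omega, by simp [hl]⟩
    · have hc1 : c = 1 ∧ k ≠ 0 := by
        rcases hc with ⟨hk, h1⟩ | h
        · exact ⟨h1, hk⟩
        · simp at h; exact absurd h hcw
      obtain ⟨hc1', hk0⟩ := hc1
      subst hc1'
      obtain ⟨k', rfl⟩ : ∃ k', k = k' + 1 := ⟨k - 1, by omega⟩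
      have hperm' : l.Perm (List.replicate k' 1 ++ [w]) := by
        have h1 := hperm.erase 1
        rw [List.erase_cons_head] at h1
        rwa [List.erase_append_left _ (by
          rw [List.mem_replicate]; exact ⟨by omega, rfl⟩),
          List.replicate_succ, List.erase_cons_head] at h1
      obtain ⟨a, b, hab, hl⟩ := ih k' w hw hperm'
      exact ⟨a + 1, b, by omega, by simp [hl, List.replicate_succ]⟩

lemma PAinv_replicate {y : List ℕ} (hy : y ≠ []) (hpos : ∀ v ∈ y, 0 < v) :
    PAinv y (List.replicate y.length 1) := by
  intro x' hperm
  have hx' : x' = List.replicate y.length 1 := by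
    rw [List.eq_replicate_iff]
    refine ⟨by simpa using hperm.length_eq.symm, fun b hb =>
      (List.mem_replicate.mp (hperm.symm.subset hb)).2⟩
  subst hx'
  refine ⟨by simp, fun v hv => ?_, ?_⟩
  · have := (List.mem_replicate.mp hv).2
    subst this
    exact ⟨le_refl _, sum_pos_of_ne_nil hy hpos⟩
  · have := contig y.sum y 0 (fun v hv => hpos v hv) (by simp)
    rwa [show Finset.Ico 1 (0 + 1) = ∅ by simp] at this

lemma one_mem_of_PA {y x : List ℕ} (hy : y ≠ []) (hpos : ∀ v ∈ y, 0 < v) (hPA : PA y x) :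
    1 ∈ x := by
  obtain ⟨hlen, hb, hpark⟩ := hPA
  by_contra h1
  have hmsz : (x.zip y).map Prod.snd = y := List.map_snd_zip (le_of_eq hlen.symm)
  refine uncov y.sum (x.zip y) ∅ 1 hpark
    (fun c hc => (hb c.1 (List.of_mem_zip (by exact hc)).1).1)
    (by simp) (by rw [hmsz]; simp) le_rfl (sum_pos_of_ne_nil hy hpos) (by simp) ?_
  intro c hc
  have hmem := (List.of_mem_zip (by exact hc)).1
  have h1le := (hb c.1 hmem).1
  rcases eq_or_lt_of_le h1le with heq | hlt
  · exact absurd (by rwa [← heq] at hmem) h1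
  · exact hlt

/-- Main lemma: every entry of an invariant parking assortment lies in `Wset`. -/
lemma mem_Wset {y x : List ℕ} (hy : y ≠ []) (hpos : ∀ v ∈ y, 0 < v)
    (hinv : PAinv y x) {w : ℕ} (hw : w ∈ x) :
    PAinv y (List.replicate (y.length - 1) 1 ++ [w]) := by
  have hPA : PA y x := hinv x (List.Perm.refl x)
  obtain ⟨hxlen, hbounds, _⟩ := hPA
  have hw1 : 1 ≤ w := (hbounds w hw).1
  have hwm : w ≤ y.sum := (hbounds w hw).2
  have hm1 : 1 ≤ y.sum := sum_pos_of_ne_nil hy hpos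
  have hylen1 : 1 ≤ y.length := by
    cases y with
    | nil => exact absurd rfl hy
    | cons a l => simp
  intro x' hperm
  have hx'len : x'.length = y.length := by
    have := hperm.length_eq
    simp at this
    omega
  refine ⟨hx'len, fun v hv => ?_, ?_⟩
  · have hv' := hperm.symm.subset hv
    rw [List.mem_append, List.mem_replicate] at hv'
    rcases hv' with ⟨_, rfl⟩ | h
    · exact ⟨le_refl _, hm1⟩
    · simp at h
      subst h
      exact ⟨hw1, hwm⟩
  · by_cases hwone : w = 1
    · have hx' : x' = List.replicate y.length 1 := by
        rw [List.eq_replicate_iff]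
        refine ⟨hx'len, fun b hb => ?_⟩
        have hb' := hperm.symm.subset hb
        rw [List.mem_append, List.mem_replicate] at hb'
        rcases hb' with ⟨_, rfl⟩ | h
        · rfl
        · simp at h; omega
      rw [hx']
      have := contig y.sum y 0 (fun v hv => hpos v hv) (by simp)
      rwa [show Finset.Ico 1 (0 + 1) = ∅ by simp] at this
    · obtain ⟨a, b, hab, hx'⟩ := decomp x' (y.length - 1) w hwone hperm.symm
      rw [hx']
      refine z3 y.sum y a x ∅ w b hxlen (by omega) (fun v hv => hpos v hv)
        (fun v hv => (hbounds v hv).1) hw1 (by simp) (by simp) ?_ (Or.inl hw)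
      intro pr hpr
      exact (hinv pr hpr.symm).2.2

/-- Splitting lemma: with a barrier `[w, w+y₁)` occupied, the lengths split into cars
parking entirely left of the barrier and entirely right of it. -/
lemma split_lemma (m w y₁ : ℕ) (hw : 1 ≤ w) (hy₁ : 1 ≤ y₁) :
    ∀ (l : List (ℕ × ℕ)) (occ : Finset ℕ),
    Park m occ l → (∀ c ∈ l, 1 ≤ c.1) → (∀ c ∈ l, 1 ≤ c.2) →
    Finset.Ico w (w + y₁) ⊆ occ →
    ∃ t u : List ℕ, t.Sublist (l.map Prod.snd) ∧ t.sum + u.sum = (l.map Prod.snd).sum ∧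
      t.sum + (occ ∩ Finset.Ico 1 w).card ≤ w - 1 ∧
      u.sum + (occ ∩ Finset.Ico (w + y₁) (m + 1)).card ≤ m + 1 - (w + y₁) := by
  intro l
  induction l with
  | nil =>
    intro occ _ _ _ _
    refine ⟨[], [], by simp, by simp, ?_, ?_⟩
    · have h1 : (occ ∩ Finset.Ico 1 w).card ≤ (Finset.Ico 1 w).card :=
        Finset.card_le_card (Finset.inter_subset_right)
      rw [Nat.card_Ico] at h1
      simp
      omega
    · have h1 : (occ ∩ Finset.Ico (w + y₁) (m + 1)).card ≤ (Finset.Ico (w + y₁) (m + 1)).card :=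
        Finset.card_le_card (Finset.inter_subset_right)
      rw [Nat.card_Ico] at h1
      simp
      omega
  | cons c l ih =>
    intro occ hpark hpos hlpos hbar
    obtain ⟨pf, ln⟩ := c
    have hpf1 : 1 ≤ pf := hpos _ (List.mem_cons_self)
    have hln1 : 1 ≤ ln := hlpos _ (List.mem_cons_self)
    cases hpark with
    | cons _ _ _ _ s hps hrest =>
      set occ' := occ ∪ Finset.Ico s (s + ln) with hocc'
      have hbar' : Finset.Ico w (w + y₁) ⊆ occ' :=
        hbar.trans Finset.subset_union_left
      obtain ⟨t, u, hsubl, hsum, hL, hR⟩ := ih occ' hrest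
        (fun c hc => hpos c (List.mem_cons_of_mem _ hc))
        (fun c hc => hlpos c (List.mem_cons_of_mem _ hc)) hbar'
      have hfit := hps.1
      have hs1 : pf ≤ s := hfit.1
      have hsm : s + ln ≤ m + 1 := hfit.2.1
      have hdisj : ∀ t' ∈ Finset.Ico s (s + ln), t' ∉ occ := hfit.2.2
      have hcases : s + ln ≤ w ∨ w + y₁ ≤ s := by
        by_contra h
        push_neg at h
        obtain ⟨h1, h2⟩ := h
        exact hdisj (max s w) (Finset.mem_Ico.mpr ⟨le_max_left _ _, by omega⟩)
          (hbar (Finset.mem_Ico.mpr ⟨le_max_right _ _, by omega⟩))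
      have hdisjL : Disjoint (occ ∩ Finset.Ico 1 w) (Finset.Ico s (s + ln)) := by
        rw [Finset.disjoint_right]
        intro a ha
        exact fun hmem => hdisj a ha (Finset.mem_inter.mp hmem).1
      cases hcases with
      | inl hleft =>
        have hocceqR : occ' ∩ Finset.Ico (w + y₁) (m + 1) = occ ∩ Finset.Ico (w + y₁) (m + 1) := by
          rw [hocc', Finset.union_inter_distrib_right]
          have : Finset.Ico s (s + ln) ∩ Finset.Ico (w + y₁) (m + 1) = ∅ := by
            rw [Finset.eq_empty_iff_forall_notMem]
            intro a ha
            simp only [Finset.mem_inter, Finset.mem_Ico] at ha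
            omega
          rw [this, Finset.union_empty]
        rw [hocceqR] at hR
        refine ⟨ln :: t, u, ?_, ?_, ?_, hR⟩
        · rw [List.map_cons]
          exact hsubl.cons₂ _
        · simp at hsum ⊢
          omega
        · have hocceq : occ' ∩ Finset.Ico 1 w =
              (occ ∩ Finset.Ico 1 w) ∪ Finset.Ico s (s + ln) := by
            rw [hocc', Finset.union_inter_distrib_right]
            congr 1
            rw [Finset.inter_eq_left]
            intro a ha
            rw [Finset.mem_Ico] at ha
            rw [Finset.mem_Ico]
            omega
          rw [hocceq, Finset.card_union_of_disjoint hdisjL, Nat.card_Ico] at hL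
          simp at hL ⊢
          omega
      | inr hright =>
        refine ⟨t, ln :: u, ?_, ?_, ?_, ?_⟩
        · rw [List.map_cons]
          exact hsubl.cons _
        · simp at hsum ⊢
          omega
        · have hocceq : occ' ∩ Finset.Ico 1 w = occ ∩ Finset.Ico 1 w := by
            rw [hocc', Finset.union_inter_distrib_right]
            have : Finset.Ico s (s + ln) ∩ Finset.Ico 1 w = ∅ := by
              rw [Finset.eq_empty_iff_forall_notMem]
              intro a ha
              simp only [Finset.mem_inter, Finset.mem_Ico] at ha
              omega
            rw [this, Finset.union_empty]
          rw [hocceq] at hL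
          exact hL
        · have hdisjR : Disjoint (occ ∩ Finset.Ico (w + y₁) (m + 1)) (Finset.Ico s (s + ln)) := by
            rw [Finset.disjoint_right]
            intro a ha
            exact fun hmem => hdisj a ha (Finset.mem_inter.mp hmem).1
          have hocceq : occ' ∩ Finset.Ico (w + y₁) (m + 1) =
              (occ ∩ Finset.Ico (w + y₁) (m + 1)) ∪ Finset.Ico s (s + ln) := by
            rw [hocc', Finset.union_inter_distrib_right]
            congr 1
            rw [Finset.inter_eq_left]
            intro a ha
            rw [Finset.mem_Ico] at ha
            rw [Finset.mem_Ico]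
            omega
          rw [hocceq, Finset.card_union_of_disjoint hdisjR, Nat.card_Ico] at hR
          simp at hR ⊢
          omega

/-- Every entry of an invariant assortment is 1 plus a subset sum of the tail of `y`. -/
lemma entry_V {y x : List ℕ} (hy : y ≠ []) (hpos : ∀ v ∈ y, 0 < v)
    (hinv : PAinv y x) {w : ℕ} (hw : w ∈ x) :
    ∃ t : List ℕ, t.Sublist y.tail ∧ w = 1 + t.sum := by
  obtain ⟨y₁, ytail, rfl⟩ : ∃ a l, y = a :: l := by
    cases y with
    | nil => exact absurd rfl hy
    | cons a l => exact ⟨a, l, rfl⟩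
  set m := (y₁ :: ytail).sum with hm
  have hPA' : PA (y₁ :: ytail) (w :: (x.erase w)) := hinv _ (List.perm_cons_erase hw)
  obtain ⟨hlen, hb, hpark⟩ := hPA'
  have hw1 : 1 ≤ w := (hb w (List.mem_cons_self)).1
  have hy₁ : 1 ≤ y₁ := hpos y₁ (List.mem_cons_self)
  rw [List.zip_cons_cons] at hpark
  cases hpark with
  | cons _ _ _ _ s hps hrest =>
    have hsw : s = w ∧ w + y₁ ≤ m + 1 := by
      have hfs := hps.1
      by_cases hwfit : w + y₁ ≤ m + 1
      · have hfitw : FitsAt ∅ m w y₁ w := ⟨le_refl _, hwfit, by simp⟩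
        have : ¬ w < s := fun hlt => hps.2 w hlt hfitw
        have := hfs.1
        exact ⟨by omega, hwfit⟩
      · exfalso
        have := hfs.1
        have := hfs.2.1
        omega
    obtain ⟨heq, hwfit⟩ := hsw
    rw [heq] at hrest
    rw [Finset.empty_union] at hrest
    obtain ⟨t, u, hsubl, hsum, hL, hR⟩ := split_lemma m w y₁ hw1 hy₁
      ((x.erase w).zip ytail) _ hrest
      (fun c hc => (hb c.1 (List.mem_cons_of_mem _ (List.of_mem_zip (by exact hc)).1)).1)
      (fun c hc => hpos c.2 (List.mem_cons_of_mem _ (List.of_mem_zip (by exact hc)).2))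
      (le_refl _)
    have hlen' : ytail.length ≤ (x.erase w).length := by
      have hxpos : 0 < x.length := List.length_pos_of_mem hw
      have h2 : (x.erase w).length = ytail.length := by simpa using hlen
      omega
    have hmsz : ((x.erase w).zip ytail).map Prod.snd = ytail :=
      List.map_snd_zip hlen'
    rw [hmsz] at hsubl hsum
    have hintL : Finset.Ico w (w + y₁) ∩ Finset.Ico 1 w = ∅ := by
      rw [Finset.eq_empty_iff_forall_notMem]
      intro a ha
      simp only [Finset.mem_inter, Finset.mem_Ico] at ha
      omega
    have hintR : Finset.Ico w (w + y₁) ∩ Finset.Ico (w + y₁) (m + 1) = ∅ := by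
      rw [Finset.eq_empty_iff_forall_notMem]
      intro a ha
      simp only [Finset.mem_inter, Finset.mem_Ico] at ha
      omega
    rw [hintL] at hL
    rw [hintR] at hR
    simp at hL hR
    have hmsum : m = y₁ + ytail.sum := by simp [hm]
    refine ⟨t, hsubl, by omega⟩

lemma sorted_prefix_one {x : List ℕ} (hs : x.Pairwise (· ≤ ·)) (h1 : ∀ v ∈ x, 1 ≤ v)
    {i : ℕ} (hi : i + deg x < x.length) : x.getD i 0 = 1 := by
  have hilt : i < x.length := by omega
  rw [List.getD_eq_getElem _ _ hilt]
  by_contra hne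
  have hx_i : 2 ≤ x[i] := by
    have := h1 x[i] (List.getElem_mem hilt)
    omega
  have hdrop : ∀ v ∈ x.drop i, (fun v => decide (v ≠ 1)) v = true := by
    intro v hv
    obtain ⟨j, hj, hvj⟩ := List.mem_iff_getElem.mp hv
    have hgel : (x.drop i)[j] = x[i + j]'(by
      rw [List.length_drop] at hj; omega) := List.getElem_drop
    have hle : x[i] ≤ x[i + j]'(by rw [List.length_drop] at hj; omega) := by
      rcases Nat.eq_zero_or_pos j with rfl | hjpos
      · simp
      · exact (List.pairwise_iff_getElem.mp hs) i (i + j) hilt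
          (by rw [List.length_drop] at hj; omega) (by omega)
    rw [← hvj, hgel]
    simp
    omega
  have hfeq : (x.drop i).filter (fun v => decide (v ≠ 1)) = x.drop i :=
    List.filter_eq_self.mpr hdrop
  have hsubl : ((x.drop i).filter (fun v => decide (v ≠ 1))).Sublist
      (x.filter (fun v => decide (v ≠ 1))) := (List.drop_sublist i x).filter _
  have hlen := hsubl.length_le
  rw [hfeq, List.length_drop] at hlen
  have : (x.filter (fun v => decide (v ≠ 1))).length = deg x := rfl
  omega

lemma deg_le_length (x : List ℕ) : deg x ≤ x.length := List.length_filter_le _ _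

lemma deg_lt_of_one_mem {x : List ℕ} (h1 : 1 ∈ x) : deg x + 1 ≤ x.length := by
  have : deg x < x.length := by
    apply List.length_filter_lt_length_iff_exists.mpr
    exact ⟨1, h1, by simp⟩
  omega

lemma filterMap_val (V : Finset ℕ) : ∀ (l : List ℕ), (∀ v ∈ l, v ∈ V) →
    (l.filterMap (fun v => if h : v ∈ V then some (⟨v, h⟩ : ↥V) else none)).map
      Subtype.val = l := by
  intro l
  induction l with
  | nil => simp
  | cons a l ih =>
    intro h
    rw [List.filterMap_cons]
    have ha : a ∈ V := h a (List.mem_cons_self)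
    rw [dif_pos ha, List.map_cons]
    rw [ih (fun v hv => h v (List.mem_cons_of_mem _ hv))]

lemma head_one {x : List ℕ} (hs : x.Pairwise (· ≤ ·)) (h1 : ∀ v ∈ x, 1 ≤ v) (hm : 1 ∈ x) :
    x = 1 :: x.tail := by
  obtain ⟨j, hj, hxj⟩ := List.mem_iff_getElem.mp hm
  cases x with
  | nil => simp at hm
  | cons a t =>
    have ha : 1 ≤ a := h1 a (List.mem_cons_self)
    have ha2 : a ≤ 1 := by
      rcases Nat.eq_zero_or_pos j with rfl | hj0
      · simp at hxj
        omega
      · have hle := (List.pairwise_iff_getElem.mp hs) 0 j (by simp) hj hj0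
        simp at hle
        rw [hxj] at hle
        exact hle
    have : a = 1 := by omega
    rw [this]
    rfl


/-- every `x ∈ PAinv↑_n(y)` lies in `{1}^{n−χ(y)} × W(y)^{χ(y)}`,
i.e. its first `n − χ(y)` entries equal 1 and its remaining entries lie in `W(y)`;
in particular `|PAinv↑_n(y)| ≤ binom(2^{n−1} + n − 2, n − 1)`. -/
theorem stmt19 (n : ℕ) (hn : 0 < n) (y : List ℕ) (hylen : y.length = n)
    (hypos : ∀ v ∈ y, 0 < v) :
    (∀ x : List ℕ, PAinv y x → x.Pairwise (· ≤ ·) →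
        (∀ i < n - chi y, x.getD i 0 = 1) ∧
        (∀ i, n - chi y ≤ i → i < n → x.getD i 0 ∈ Wset y)) ∧
      Set.ncard {x : List ℕ | PAinv y x ∧ x.Pairwise (· ≤ ·)} ≤
        (2 ^ (n - 1) + n - 2).choose (n - 1) := by
  classical
  have hy : y ≠ [] := by
    intro h
    rw [h] at hylen
    simp at hylen
    omega
  have hm1 : 1 ≤ y.sum := sum_pos_of_ne_nil hy hypos
  have hbdd : BddAbove {d | ∃ x, PAinv y x ∧ deg x = d} := by
    refine ⟨n, fun d hd => ?_⟩
    obtain ⟨x, hx, rfl⟩ := hd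
    have hlen := (hx x (List.Perm.refl x)).1
    calc deg x ≤ x.length := deg_le_length x
    _ = n := by rw [hlen, hylen]
  constructor
  · intro x hinv hsort
    have hPA := hinv x (List.Perm.refl x)
    have hxlen : x.length = n := by rw [hPA.1, hylen]
    constructor
    · intro i hi
      have hdegle : deg x ≤ chi y := le_csSup hbdd ⟨x, hinv, rfl⟩
      exact sorted_prefix_one hsort (fun v hv => (hPA.2.1 v hv).1) (by omega)
    · intro i hge hilt
      have hmem : x.getD i 0 ∈ x := by
        rw [List.getD_eq_getElem _ _ (show i < x.length by omega)]
        exact List.getElem_mem _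
      exact mem_Wset hy hypos hinv hmem
  · -- the counting statement
    set S := {x : List ℕ | PAinv y x ∧ x.Pairwise (· ≤ ·)} with hS
    set V : Finset ℕ := ((y.tail.sublists).map (fun t => 1 + t.sum)).toFinset with hV
    have h1V : 1 ∈ V := by
      rw [hV, List.mem_toFinset, List.mem_map]
      exact ⟨[], List.mem_sublists.mpr (List.nil_sublist _), by simp⟩
    have hVcard : V.card ≤ 2 ^ (n - 1) := by
      calc V.card ≤ ((y.tail.sublists).map (fun t => 1 + t.sum)).length :=
            List.toFinset_card_le _
      _ = 2 ^ (n - 1) := by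
          rw [List.length_map, List.length_sublists, List.length_tail, hylen]
    set k := n - 1 with hk
    set emb : List ℕ → Multiset ↥V := fun x =>
      ((x.tail.filterMap (fun v => if h : v ∈ V then some (⟨v, h⟩ : ↥V) else none)) :
        Multiset ↥V) with hemb
    set f : List ℕ → Sym ↥V k := fun x =>
      if h : Multiset.card (emb x) = k then ⟨emb x, h⟩ else Sym.replicate k ⟨1, h1V⟩ with hf
    -- facts about members of S
    have hSfact : ∀ x ∈ S, (∀ v ∈ x.tail, v ∈ V) ∧ x = 1 :: x.tail ∧ x.tail.length = k := by
      intro x hx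
      obtain ⟨hinv, hsort⟩ := hx
      have hPA := hinv x (List.Perm.refl x)
      have hxlen : x.length = n := by rw [hPA.1, hylen]
      have hbV : ∀ v ∈ x.tail, v ∈ V := by
        intro v hv
        obtain ⟨t, hsub, hveq⟩ := entry_V hy hypos hinv (List.mem_of_mem_tail hv)
        rw [hV, List.mem_toFinset, List.mem_map]
        exact ⟨t, List.mem_sublists.mpr hsub, hveq.symm⟩
      refine ⟨hbV, head_one hsort (fun v hv => (hPA.2.1 v hv).1)
        (one_mem_of_PA hy hypos hPA), ?_⟩
      rw [List.length_tail, hxlen]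
    have hembval : ∀ x ∈ S, (emb x).map Subtype.val = (x.tail : Multiset ℕ) := by
      intro x hx
      simp only [hemb]
      rw [Multiset.map_coe, filterMap_val V x.tail (hSfact x hx).1]
    have hembcard : ∀ x ∈ S, Multiset.card (emb x) = k := by
      intro x hx
      have h1 : Multiset.card ((emb x).map Subtype.val) = Multiset.card (emb x) :=
        Multiset.card_map _ _
      rw [hembval x hx] at h1
      simp at h1
      rw [← h1]
      have h2 := (hSfact x hx).2.2
      rw [List.length_tail] at h2
      exact h2
    have hinj : Set.InjOn f S := by
      intro x₁ hx₁ x₂ hx₂ hfeq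
      rw [hf] at hfeq
      simp only [dif_pos (hembcard x₁ hx₁), dif_pos (hembcard x₂ hx₂)] at hfeq
      have hembeq : emb x₁ = emb x₂ := by
        simpa [hembcard x₁ hx₁, hembcard x₂ hx₂] using congrArg Subtype.val hfeq
      have hperm : x₁.tail.Perm x₂.tail := by
        rw [← Multiset.coe_eq_coe]
        rw [← hembval x₁ hx₁, ← hembval x₂ hx₂, hembeq]
      have hs₁ : x₁.tail.Pairwise (· ≤ ·) := (hx₁.2).sublist (List.tail_sublist _)
      have hs₂ : x₂.tail.Pairwise (· ≤ ·) := (hx₂.2).sublist (List.tail_sublist _)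
      have hteq : x₁.tail = x₂.tail := List.Perm.eq_of_pairwise' hs₁ hs₂ hperm
      calc x₁ = 1 :: x₁.tail := (hSfact x₁ hx₁).2.1
      _ = 1 :: x₂.tail := by rw [hteq]
      _ = x₂ := ((hSfact x₂ hx₂).2.1).symm
    have hcard := Set.ncard_le_ncard_of_injOn f
      (fun a _ => Set.mem_univ (f a)) hinj Set.finite_univ
    rw [Set.ncard_univ, Nat.card_eq_fintype_card, Sym.card_sym_eq_choose, Fintype.card_coe]
      at hcard
    refine hcard.trans ?_
    apply Nat.choose_le_choose
    have hVpos : 1 ≤ V.card := Finset.card_pos.mpr ⟨1, h1V⟩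
    omega
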